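/- Square root law for the Gaussian steganographic model: let ε > 0. For every feasible pair (μs, Σs), one has (1/2)·( Real.log (det Σs) − Real.log (det Σc) ) ≤ 2 · ε · Real.sqrt n. (The left-hand side is the maximum embedding rate H(P_s) − H(P_c) of the stego-object over the cover; thus the maximum embedding rate grows at most like the square root of the number of cover elements.) -/

import Mathlib

open Matrix

/-- The (forward) Gaussian KL expression. -/
noncomputable def klGauss {n : ℕ} (Sc : Matrix (Fin n) (Fin n) ℝ) (μc : Fin n → ℝ)
    (Ss : Matrix (Fin n) (Fin n) ℝ) (μs : Fin n → ℝ) : ℝ :=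
  (1 / 2) * ((Sc⁻¹ * Ss).trace + (μc - μs) ⬝ᵥ (Sc⁻¹ *ᵥ (μc - μs))
    + Real.log (Sc.det / Ss.det) - n)

/-- For `x > 0`, `log x ≤ 2 √(x - log x - 1)`. -/
lemma log_le_two_sqrt {x : ℝ} (hx : 0 < x) :
    Real.log x ≤ 2 * Real.sqrt (x - Real.log x - 1) := by
  have hf : 0 ≤ x - Real.log x - 1 := by
    have := Real.log_le_sub_one_of_pos hx; linarith
  rcases le_or_gt x 1 with h | h
  · have h0 : Real.log x ≤ 0 := Real.log_nonpos hx.le h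
    have := Real.sqrt_nonneg (x - Real.log x - 1)
    linarith
  · have hu : 0 ≤ Real.log x := Real.log_nonneg h.le
    set u := Real.log x with hudef
    have hx' : x = Real.exp u := (Real.exp_log hx).symm
    have h1 : u / 2 + 1 ≤ Real.exp (u / 2) := Real.add_one_le_exp _
    have h2 : Real.exp (u / 2) * Real.exp (u / 2) = Real.exp u := by
      rw [← Real.exp_add]; ring_nf
    have hsq : u ^ 2 ≤ 4 * (x - u - 1) := by
      rw [hx']
      nlinarith [h1, hu, Real.exp_pos (u / 2)]
    have h4 : u ≤ Real.sqrt (4 * (x - u - 1)) := by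
      rw [Real.le_sqrt hu (by linarith)]
      exact hsq
    calc u ≤ Real.sqrt (4 * (x - u - 1)) := h4
      _ = 2 * Real.sqrt (x - u - 1) := by
          rw [show (4 : ℝ) * (x - u - 1) = 2 ^ 2 * (x - u - 1) by ring,
            Real.sqrt_mul (by positivity), Real.sqrt_sq (by norm_num)]

/-- Square root law for the Gaussian steganographic model: for every feasible
pair `(μs, Σs)`, the embedding rate `(1/2)(log det Σs − log det Σc)` is at most
`2 · ε · √n`. -/
theorem square_root_law_gaussian {n : ℕ} (hn : 1 ≤ n)
    (Sc : Matrix (Fin n) (Fin n) ℝ) (hSc : Sc.PosDef) (μc : Fin n → ℝ)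
    (ε : ℝ) (hε : 0 < ε)
    (μs : Fin n → ℝ) (Ss : Matrix (Fin n) (Fin n) ℝ) (hSs : Ss.PosDef)
    (hfeas : klGauss Sc μc Ss μs ≤ 2 * ε ^ 2) :
    (1 / 2) * (Real.log Ss.det - Real.log Sc.det) ≤ 2 * ε * Real.sqrt n := by
  have hScInv : (Sc⁻¹).PosDef := hSc.inv
  set R := (open scoped MatrixOrder in CFC.sqrt (Sc⁻¹)) with hRdef
  have hRps : R.PosSemidef := by
    open scoped MatrixOrder in exact (CFC.sqrt_nonneg _).posSemidef
  have hRherm : R.IsHermitian := hRps.1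
  have hRR : R * R = Sc⁻¹ := by
    open scoped MatrixOrder in exact CFC.sqrt_mul_sqrt_self _ hScInv.posSemidef.nonneg
  have hdetR : R.det * R.det = (Sc⁻¹).det := by rw [← det_mul, hRR]
  have hdetScInv : 0 < (Sc⁻¹).det := hScInv.det_pos
  have hdetRne : R.det ≠ 0 := by
    intro h; rw [h, zero_mul] at hdetR; exact hdetScInv.ne' hdetR.symm
  set A := R * Ss * R with hAdef
  have hAh : A.IsHermitian := by
    have := Matrix.isHermitian_conjTranspose_mul_mul R hSs.1
    rwa [hRherm.eq] at this
  have hApd : A.PosDef := by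
    refine Matrix.PosDef.of_dotProduct_mulVec_pos hAh fun x hx => ?_
    have hxR : R *ᵥ x ≠ 0 := by
      intro h
      have hinj : Function.Injective R.mulVec :=
        mulVec_injective_iff_isUnit.mpr ((isUnit_iff_isUnit_det R).mpr hdetRne.isUnit)
      exact hx (hinj (by simpa using h))
    have := hSs.dotProduct_mulVec_pos hxR
    have hRc : Rᴴ = R := hRherm.eq
    simpa only [hAdef, star_mulVec, dotProduct_mulVec, vecMul_vecMul, hRc] using this
  have htrA : A.trace = (Sc⁻¹ * Ss).trace := by
    rw [hAdef, trace_mul_cycle, hRR]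
  have hdetA : A.det = Ss.det * (Sc⁻¹).det := by
    rw [hAdef, det_mul, det_mul, ← hdetR]; ring
  set ev := hApd.1.eigenvalues with hevdef
  have hevpos : ∀ i, 0 < ev i := hApd.eigenvalues_pos
  have htr : A.trace = ∑ i, ev i := by
    nth_rewrite 1 [hApd.1.spectral_theorem]
    rw [Unitary.conjStarAlgAut_apply, trace_mul_cycle, Unitary.coe_star_mul_self, one_mul]
    simp [Matrix.trace_diagonal]
    rfl
  have hdet : A.det = ∏ i, ev i := by
    simpa using hApd.1.det_eq_prod_eigenvalues
  have hlogdet : Real.log A.det = ∑ i, Real.log (ev i) := by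
    rw [hdet, Real.log_prod]
    exact fun i _ => (hevpos i).ne'
  -- determinants of covers/stegos
  have hdetSc : 0 < Sc.det := hSc.det_pos
  have hdetSs : 0 < Ss.det := hSs.det_pos
  have hdetScInvEq : (Sc⁻¹).det = (Sc.det)⁻¹ := by
    have h1 : Sc * Sc⁻¹ = 1 := Matrix.mul_nonsing_inv Sc hdetSc.ne'.isUnit
    have := congrArg Matrix.det h1
    rw [det_mul, det_one] at this
    field_simp at this ⊢
    linarith
  have hlogA : Real.log A.det = Real.log Ss.det - Real.log Sc.det := by
    rw [hdetA, hdetScInvEq, Real.log_mul hdetSs.ne' (by positivity), Real.log_inv]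
    ring
  -- nonnegativity of the quadratic term
  have hQ : 0 ≤ (μc - μs) ⬝ᵥ (Sc⁻¹ *ᵥ (μc - μs)) := by
    simpa using hScInv.posSemidef.dotProduct_mulVec_nonneg (μc - μs)
  -- feasibility rewritten
  have hlogdiv : Real.log (Sc.det / Ss.det) = Real.log Sc.det - Real.log Ss.det :=
    Real.log_div hdetSc.ne' hdetSs.ne'
  have hfeas' : (Sc⁻¹ * Ss).trace + (Real.log Sc.det - Real.log Ss.det) - n ≤ 4 * ε ^ 2 := by
    unfold klGauss at hfeas
    rw [hlogdiv] at hfeas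
    linarith
  -- per-eigenvalue quantities
  set F : Fin n → ℝ := fun i => ev i - Real.log (ev i) - 1 with hFdef
  have hFnonneg : ∀ i, 0 ≤ F i := fun i => by
    have := Real.log_le_sub_one_of_pos (hevpos i)
    simp only [hFdef]; linarith
  have hsumF : ∑ i, F i = A.trace - Real.log A.det - n := by
    simp only [hFdef]
    rw [Finset.sum_sub_distrib, Finset.sum_sub_distrib, htr, hlogdet]
    simp
  have hsumF_le : ∑ i, F i ≤ 4 * ε ^ 2 := by
    rw [hsumF, htrA, hlogA]
    linarith
  -- bound the log-det sum
  have hL : ∑ i, Real.log (ev i) ≤ 2 * ∑ i, Real.sqrt (F i) := by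
    rw [Finset.mul_sum]
    exact Finset.sum_le_sum fun i _ => log_le_two_sqrt (hevpos i)
  have hCS : (∑ i, Real.sqrt (F i)) ^ 2 ≤ (n : ℝ) * ∑ i, F i := by
    have := sq_sum_le_card_mul_sum_sq (s := Finset.univ) (f := fun i => Real.sqrt (F i))
    simpa [Real.sq_sqrt (hFnonneg _)] using this
  have hsqrtsum_nonneg : 0 ≤ ∑ i, Real.sqrt (F i) :=
    Finset.sum_nonneg fun i _ => Real.sqrt_nonneg _
  have hbound : ∑ i, Real.sqrt (F i) ≤ Real.sqrt n * (2 * ε) := by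
    have h1 : (∑ i, Real.sqrt (F i)) ^ 2 ≤ (n : ℝ) * ((2 * ε) ^ 2) := by
      calc (∑ i, Real.sqrt (F i)) ^ 2 ≤ (n : ℝ) * ∑ i, F i := hCS
        _ ≤ (n : ℝ) * (4 * ε ^ 2) := by
            apply mul_le_mul_of_nonneg_left hsumF_le (by positivity)
        _ = (n : ℝ) * ((2 * ε) ^ 2) := by ring
    have h2 : ∑ i, Real.sqrt (F i) ≤ Real.sqrt ((n : ℝ) * ((2 * ε) ^ 2)) := by
      rw [Real.le_sqrt hsqrtsum_nonneg (by positivity)]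
      exact h1
    rwa [Real.sqrt_mul (by positivity), Real.sqrt_sq (by positivity)] at h2
  have hfinal : Real.log Ss.det - Real.log Sc.det ≤ 2 * (Real.sqrt n * (2 * ε)) := by
    have := hlogdet
    calc Real.log Ss.det - Real.log Sc.det = ∑ i, Real.log (ev i) := by
          rw [← hlogdet, hlogA]
      _ ≤ 2 * ∑ i, Real.sqrt (F i) := hL
      _ ≤ 2 * (Real.sqrt n * (2 * ε)) := by linarith [hbound]
  linarith
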